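/- arXiv:math/0212314 — 5 statements merged into one kernel-verified Lean document; each statement's English description precedes it below -/
import Mathlib

section
/- The function z ↦ log|z + i| · Im(z) / |z|^4 is not Lebesgue integrable on ℂ with respect to the standard area (Lebesgue) measure; that is, the integral of its absolute value over ℂ is infinite. -/
open Complex MeasureTheory Set ENNReal

noncomputable section

private def Aset (n : ℕ) : Set ℂ :=
  {z | (1/2 : ℝ) ^ (n+1) < ‖z‖ ∧ ‖z‖ ≤ (1/2 : ℝ) ^ n ∧
       ‖z‖ / 2 ≤ z.im}

private lemma Aset_measurable (n : ℕ) : MeasurableSet (Aset n) := by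
  have h1 : Measurable fun z : ℂ => ‖z‖ := continuous_norm.measurable
  have h2 : Measurable fun z : ℂ => z.im := Complex.measurable_im
  exact (measurableSet_lt measurable_const h1).inter
    ((measurableSet_le h1 measurable_const).inter
      (measurableSet_le (h1.div_const 2) h2))

private lemma Aset_disjoint : Pairwise (Function.onFun Disjoint Aset) := by
  intro m n hmn
  rw [Function.onFun, Set.disjoint_left]
  rintro z ⟨hm1, hm2, -⟩ ⟨hn1, hn2, -⟩
  have hb0 : (0:ℝ) < 1/2 := by norm_num
  have hb1 : (1/2:ℝ) < 1 := by norm_num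
  have h1 : m < n + 1 := by
    rw [← pow_lt_pow_iff_right_of_lt_one₀ hb0 hb1]; exact lt_of_lt_of_le hn1 hm2
  have h2 : n < m + 1 := by
    rw [← pow_lt_pow_iff_right_of_lt_one₀ hb0 hb1]; exact lt_of_lt_of_le hm1 hn2
  omega

private lemma ball_subset_Aset (n : ℕ) :
    Metric.ball (((3/4 * (1/2:ℝ)^n : ℝ) : ℂ) * Complex.I) ((1/2:ℝ)^n / 8) ⊆ Aset n := by
  set b : ℝ := (1/2:ℝ)^n with hb
  have hbpos : 0 < b := by positivity
  intro z hz
  rw [Metric.mem_ball, Complex.dist_eq] at hz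
  set c : ℂ := ((3/4 * b : ℝ) : ℂ) * Complex.I with hc
  have habsc : ‖c‖ = 3/4 * b := by
    rw [hc, norm_mul, Complex.norm_I, Complex.norm_real, Real.norm_eq_abs, mul_one,
      abs_of_pos (by positivity)]
  have h1 : ‖z‖ ≤ 7/8 * b := by
    calc ‖z‖ = ‖z - c + c‖ := by ring_nf
      _ ≤ ‖z - c‖ + ‖c‖ := norm_add_le _ _
      _ ≤ b/8 + 3/4*b := by rw [habsc]; linarith [hz.le]
      _ = 7/8 * b := by ring
  have h2 : 5/8 * b ≤ ‖z‖ := by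
    have h : ‖c‖ ≤ ‖c - z‖ + ‖z‖ := by
      calc ‖c‖ = ‖c - z + z‖ := by ring_nf
        _ ≤ _ := norm_add_le _ _
    have hcz : ‖c - z‖ < b/8 := by
      rwa [← norm_neg, neg_sub] at hz
    rw [habsc] at h; linarith
  have h3 : 5/8 * b ≤ z.im := by
    have him : |(z - c).im| ≤ ‖z - c‖ := Complex.abs_im_le_norm _
    have : (z - c).im = z.im - 3/4 * b := by
      simp [hc, Complex.sub_im, Complex.mul_im]
    rw [this] at him
    have := abs_le.1 him
    linarith [hz.le, this.1]
  refine ⟨?_, ?_, ?_⟩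
  · have : ((1/2:ℝ))^(n+1) = b/2 := by rw [pow_succ, hb]; ring
    rw [this]; linarith
  · linarith
  · linarith

private lemma Aset_pointwise {n : ℕ} {z : ℂ} (hz : z ∈ Aset n) :
    1 / (8 * ((1/2:ℝ)^n)^2) ≤
      Real.log (‖z + Complex.I‖) * z.im / ‖z‖ ^ 4 := by
  set b : ℝ := (1/2:ℝ)^n with hb
  obtain ⟨h1, h2, h3⟩ := hz
  set a : ℝ := ‖z‖ with ha
  have hbpos : 0 < b := by positivity
  have ha0 : 0 < a := lt_trans (by positivity) h1
  have hb1 : b ≤ 1 := by rw [hb]; exact pow_le_one₀ (by norm_num) (by norm_num)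
  have ha1 : a ≤ 1 := le_trans h2 hb1
  have him : a / 2 ≤ z.im := h3
  -- |z + I|^2 = a^2 + 2 im + 1
  have hsq : (‖z + Complex.I‖)^2 = a^2 + 2 * z.im + 1 := by
    rw [ha, Complex.sq_norm, Complex.sq_norm, Complex.normSq_apply, Complex.normSq_apply]
    simp [Complex.add_re, Complex.add_im]
    ring
  have habs1 : 1 + a ≤ (‖z + Complex.I‖)^2 := by
    rw [hsq]; nlinarith
  have hlog : a / 4 ≤ Real.log (‖z + Complex.I‖) := by
    have h1a : (0:ℝ) < 1 + a := by linarith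
    have hlog2 : Real.log (1 + a) ≤ Real.log ((‖z + Complex.I‖)^2) :=
      Real.log_le_log h1a habs1
    have hlog3 : Real.log ((‖z + Complex.I‖)^2) =
        2 * Real.log (‖z + Complex.I‖) := by
      rw [Real.log_pow]; push_cast; ring
    have hlb : a / 2 ≤ Real.log (1 + a) := by
      have := Real.one_sub_inv_le_log_of_pos h1a
      have hinv : (1 + a)⁻¹ ≤ 1 - a/2 := by
        rw [inv_le_iff_one_le_mul₀ h1a]  -- maybe wrong name
        nlinarith
      linarith
    linarith [hlog3 ▸ hlog2]
  have hL0 : 0 < Real.log (‖z + Complex.I‖) := lt_of_lt_of_le (by positivity) hlog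
  rw [le_div_iff₀ (by positivity : (0:ℝ) < a^4)]
  have hmul : a/4 * (a/2) ≤ Real.log (‖z + Complex.I‖) * z.im :=
    mul_le_mul hlog him (by positivity) hL0.le
  have hab : a ≤ b := h2
  calc 1 / (8 * b^2) * a^4 ≤ 1 / (8 * b^2) * (a^2 * b^2) := by
        have hab2 : a^2 ≤ b^2 := by nlinarith
        have : a^4 ≤ a^2 * b^2 := by
          calc a^4 = a^2 * a^2 := by ring
            _ ≤ a^2 * b^2 := mul_le_mul_of_nonneg_left hab2 (sq_nonneg a)
        exact mul_le_mul_of_nonneg_left this (by positivity)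
    _ = a^2 / 8 := by field_simp
    _ = a/4 * (a/2) := by ring
    _ ≤ _ := hmul

end

/-- The function `z ↦ log|z + i| · Im z / |z|⁴` is not Lebesgue integrable on `ℂ`:
the integral of its absolute value over `ℂ` is infinite. -/
theorem not_integrable_log_abs_add_I_mul_im :
    ¬ Integrable (fun z : ℂ =>
        Real.log (‖z + Complex.I‖) * z.im / ‖z‖ ^ 4) volume ∧
    ∫⁻ z : ℂ, ENNReal.ofReal
        |Real.log (‖z + Complex.I‖) * z.im / ‖z‖ ^ 4| = ⊤ := by
  set f : ℂ → ℝ := fun z =>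
    Real.log (‖z + Complex.I‖) * z.im / ‖z‖ ^ 4 with hf
  set g : ℂ → ℝ≥0∞ := fun z => ENNReal.ofReal |f z| with hg
  have hterm : ∀ n : ℕ, ENNReal.ofReal (Real.pi / 512) ≤ ∫⁻ z in Aset n, g z := by
    intro n
    set b : ℝ := (1/2:ℝ)^n with hb
    have hbpos : (0:ℝ) < b := by positivity
    calc ENNReal.ofReal (Real.pi/512)
        = ENNReal.ofReal (1/(8*b^2)) *
            volume (Metric.ball (((3/4 * b : ℝ) : ℂ) * Complex.I) (b/8)) := by
          rw [Complex.volume_ball, ← ENNReal.ofReal_coe_nnreal, NNReal.coe_real_pi,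
            ← ENNReal.ofReal_pow (by positivity), ← ENNReal.ofReal_mul (by positivity),
            ← ENNReal.ofReal_mul (by positivity)]
          congr 1
          field_simp
          ring
      _ ≤ ENNReal.ofReal (1/(8*b^2)) * volume (Aset n) := by
          exact mul_le_mul_right (measure_mono (ball_subset_Aset n)) _
      _ = ∫⁻ _ in Aset n, ENNReal.ofReal (1/(8*b^2)) := (setLIntegral_const _ _).symm
      _ ≤ ∫⁻ z in Aset n, g z := by
          refine setLIntegral_mono' (Aset_measurable n) (fun z hz => ?_)
          exact ENNReal.ofReal_le_ofReal ((Aset_pointwise hz).trans (le_abs_self _))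
  have htop : ∫⁻ z : ℂ, g z = ⊤ := by
    have h1 : ∫⁻ z in ⋃ n, Aset n, g z ≤ ∫⁻ z, g z := setLIntegral_le_lintegral _ _
    rw [lintegral_iUnion Aset_measurable Aset_disjoint] at h1
    have hc : (ENNReal.ofReal (Real.pi / 512)) ≠ 0 :=
      (ENNReal.ofReal_pos.mpr (by positivity)).ne'
    have h2 : (⊤:ℝ≥0∞) ≤ ∑' n : ℕ, ∫⁻ z in Aset n, g z := by
      rw [← ENNReal.tsum_const_eq_top_of_ne_zero (α := ℕ) hc]
      exact ENNReal.tsum_le_tsum hterm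
    exact top_le_iff.mp (h2.trans h1)
  refine ⟨fun h => ?_, htop⟩
  have hfin := h.hasFiniteIntegral
  rw [HasFiniteIntegral] at hfin
  simp_rw [Real.enorm_eq_ofReal_abs] at hfin
  rw [show (fun z : ℂ => ENNReal.ofReal |f z|) = g from rfl] at hfin
  exact absurd htop (by simpa using hfin.ne)
end

section
/- For every real number r, the integral over t from 0 to 2π of log|r·exp(i t) + i| · cos(t) dt equals 0. -/
open Complex Real

/-- For every real `r`, `∫ t in 0..2π, log|r·exp(i t) + i| · cos t dt = 0`. -/
theorem circle_average_log_abs_add_I_mul_cos (r : ℝ) :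
    (∫ t in (0 : ℝ)..(2 * Real.pi),
        Real.log (‖(r : ℂ) * Complex.exp (Complex.I * (t : ℂ)) + Complex.I‖)
          * Real.cos t) = 0 := by
  set f : ℝ → ℝ := fun t =>
    Real.log (‖(r : ℂ) * Complex.exp (Complex.I * (t : ℂ)) + Complex.I‖)
      * Real.cos t with hf
  have hper : Function.Periodic f (2 * Real.pi) := by
    intro t
    simp only [hf]
    have h1 : Complex.exp (Complex.I * ((t + 2 * Real.pi : ℝ) : ℂ))
        = Complex.exp (Complex.I * (t : ℂ)) := by
      push_cast
      rw [mul_add, Complex.exp_add]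
      have : Complex.I * (2 * (Real.pi : ℂ)) = 2 * Real.pi * Complex.I := by ring
      rw [this, Complex.exp_two_pi_mul_I, mul_one]
    rw [h1, Real.cos_add_two_pi]
  have hsym : ∀ t : ℝ, f (Real.pi - t) = - f t := by
    intro t
    have h1 : (r : ℂ) * Complex.exp (Complex.I * ((Real.pi - t : ℝ) : ℂ)) + Complex.I
        = - (starRingEnd ℂ) ((r : ℂ) * Complex.exp (Complex.I * (t : ℂ)) + Complex.I) := by
      push_cast
      rw [map_add, map_mul, Complex.conj_ofReal, ← Complex.exp_conj]
      have hc : (starRingEnd ℂ) (Complex.I * (t : ℂ)) = - (Complex.I * (t : ℂ)) := by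
        rw [map_mul, Complex.conj_I, Complex.conj_ofReal]; ring
      rw [hc]
      have h2 : Complex.I * ((Real.pi : ℂ) - (t : ℂ))
          = (Real.pi : ℂ) * Complex.I + (-(Complex.I * (t : ℂ))) := by ring
      rw [h2, Complex.exp_add, Complex.exp_pi_mul_I, Complex.conj_I]
      ring
    have habs : ‖(r : ℂ) * Complex.exp (Complex.I * ((Real.pi - t : ℝ) : ℂ)) + Complex.I‖
        = ‖(r : ℂ) * Complex.exp (Complex.I * (t : ℂ)) + Complex.I‖ := by
      rw [h1, norm_neg, Complex.norm_conj]
    simp only [hf]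
    rw [habs, Real.cos_pi_sub]
    ring
  have key : (∫ t in (0 : ℝ)..(2 * Real.pi), f (Real.pi - t))
      = ∫ t in (0 : ℝ)..(2 * Real.pi), f t := by
    rw [intervalIntegral.integral_comp_sub_left f Real.pi,
      show Real.pi - 2 * Real.pi = -Real.pi by ring, sub_zero]
    have h := hper.intervalIntegral_add_eq (-Real.pi) 0
    rw [show -Real.pi + 2 * Real.pi = Real.pi by ring, zero_add] at h
    exact h
  have key2 : (∫ t in (0 : ℝ)..(2 * Real.pi), f (Real.pi - t))
      = - ∫ t in (0 : ℝ)..(2 * Real.pi), f t := by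
    simp only [hsym]
    exact intervalIntegral.integral_neg
  have : (∫ t in (0 : ℝ)..(2 * Real.pi), f t) = 0 := by linarith [key, key2, key.symm.trans key2]
  simpa [hf] using this
end

section
/- For every real number r > 0, the integral over t from 0 to 2π of log|r·exp(i t) + i| · sin(t) dt is strictly positive. -/
open Complex Real

private lemma aux_sin_ne_neg_one {t : ℝ} (h1 : π < t) (h2 : t < 2 * π) (h3 : t ≠ 3 * π / 2) :
    Real.sin t ≠ -1 := by
  intro hs
  have hpi := Real.pi_pos
  have hc : Real.cos t = 0 := by nlinarith [Real.sin_sq_add_cos_sq t]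
  rw [Real.cos_eq_zero_iff] at hc
  obtain ⟨n, hn⟩ := hc
  rw [hn] at h1 h2
  have hn1 : (0 : ℝ) < (n : ℝ) := by nlinarith
  have hn2 : (n : ℝ) < 2 := by nlinarith
  have hn1' : 0 < n := by exact_mod_cast hn1
  have hn2' : n < 2 := by exact_mod_cast hn2
  have : n = 1 := by omega
  subst this
  apply h3
  rw [hn]
  push_cast
  ring

private lemma aux_phi_eq (t : ℝ) :
    Real.cos t * Real.log (2 + 2 * Real.sin t) =
      Real.cos t * Real.log 2 + 2 * (Real.cos t * Real.log (Real.cos t))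
        - Real.cos t * Real.log (1 - Real.sin t) := by
  rcases eq_or_ne (Real.cos t) 0 with hc | hc
  · simp [hc]
  · have hsq : Real.cos t ^ 2 = (1 - Real.sin t) * (1 + Real.sin t) := by
      nlinarith [Real.sin_sq_add_cos_sq t]
    have h1 : (1 : ℝ) - Real.sin t ≠ 0 := by
      intro h
      apply hc
      have h0 : Real.cos t ^ 2 = 0 := by rw [hsq, h, zero_mul]
      exact pow_eq_zero_iff two_ne_zero |>.mp h0
    have h2 : (1 : ℝ) + Real.sin t ≠ 0 := by
      intro h
      apply hc
      have h0 : Real.cos t ^ 2 = 0 := by rw [hsq, h, mul_zero]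
      exact pow_eq_zero_iff two_ne_zero |>.mp h0
    have e1 : 2 + 2 * Real.sin t = 2 * (1 + Real.sin t) := by ring
    have e2 : 1 + Real.sin t = Real.cos t ^ 2 / (1 - Real.sin t) := by
      field_simp
      nlinarith [Real.sin_sq_add_cos_sq t]
    rw [e1, Real.log_mul two_ne_zero h2, e2,
      Real.log_div (pow_ne_zero 2 hc) h1, Real.log_pow]
    push_cast
    ring

private noncomputable def auxB : ℝ → ℝ := fun t =>
  -(Real.cos t * Real.log (2 + 2 * Real.sin t)) + t + Real.cos t + t * Real.log 4

private lemma auxB_contOn : ContinuousOn auxB (Set.Icc π (2 * π)) := by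
  have hB : auxB = fun t =>
      -(Real.cos t * Real.log 2 + 2 * (Real.cos t * Real.log (Real.cos t))
        - Real.cos t * Real.log (1 - Real.sin t)) + t + Real.cos t + t * Real.log 4 := by
    funext t
    unfold auxB
    rw [aux_phi_eq]
  rw [hB]
  have hsin : ∀ t ∈ Set.Icc π (2 * π), (1 : ℝ) - Real.sin t ≠ 0 := by
    intro t ht
    have h := Real.sin_nonneg_of_nonneg_of_le_pi (x := t - π) (by linarith [ht.1]) (by linarith [ht.2])
    have he : Real.sin (t - π) = -Real.sin t := by simp [Real.sin_sub]
    rw [he] at h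
    intro hcontra
    linarith
  have hC : ContinuousOn (fun t => Real.cos t * Real.log (1 - Real.sin t)) (Set.Icc π (2 * π)) :=
    Real.continuous_cos.continuousOn.mul
      ((continuous_const.sub Real.continuous_sin).continuousOn.log hsin)
  have hAB : Continuous (fun t => Real.cos t * Real.log 2
      + 2 * (Real.cos t * Real.log (Real.cos t))) :=
    (Real.continuous_cos.mul continuous_const).add
      (continuous_const.mul (Real.continuous_mul_log.comp Real.continuous_cos))
  exact ((((hAB.continuousOn.sub hC).neg.add continuous_id.continuousOn).add
    Real.continuous_cos.continuousOn).add (continuous_id.mul continuous_const).continuousOn)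

private lemma auxB_hasDeriv {t : ℝ} (h : Real.sin t ≠ -1) :
    HasDerivAt auxB (Real.log (2 + 2 * Real.sin t) * Real.sin t + Real.log 4) t := by
  have hden : 2 + 2 * Real.sin t ≠ 0 := fun h0 => h (by linarith)
  have d1 : HasDerivAt (fun t => 2 + 2 * Real.sin t) (2 * Real.cos t) t := by
    simpa using ((Real.hasDerivAt_sin t).const_mul 2).const_add 2
  have d2 : HasDerivAt (fun t => Real.log (2 + 2 * Real.sin t))
      (2 * Real.cos t / (2 + 2 * Real.sin t)) t := d1.log hden
  have d3 := Real.hasDerivAt_cos t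
  have d4 := d3.mul d2
  have d5 := ((d4.neg.add (hasDerivAt_id' (x := t))).add d3).add
    ((hasDerivAt_id' (x := t)).mul_const (Real.log 4))
  have hc : Real.cos t * (2 * Real.cos t / (2 + 2 * Real.sin t)) = 1 - Real.sin t := by
    rw [mul_div_assoc', div_eq_iff hden]; nlinarith [Real.sin_sq_add_cos_sq t]
  exact d5.congr_deriv (by rw [hc]; ring)

private lemma aux_g1_lower (t : ℝ) :
    -Real.log 4 ≤ Real.log (2 + 2 * Real.sin t) * Real.sin t := by
  have hs1 : Real.sin t ≤ 1 := Real.sin_le_one t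
  have hs2 : -1 ≤ Real.sin t := Real.neg_one_le_sin t
  have hlog4 : (0 : ℝ) ≤ Real.log 4 := Real.log_nonneg (by norm_num)
  have hb : Real.log (2 + 2 * Real.sin t) ≤ Real.log 4 := by
    rcases eq_or_lt_of_le (by linarith : (0 : ℝ) ≤ 2 + 2 * Real.sin t) with hcase | hcase
    · rw [← hcase, Real.log_zero]; exact hlog4
    · exact (Real.log_le_log_iff hcase (by norm_num)).mpr (by linarith)
  rcases le_or_gt 0 (Real.log (2 + 2 * Real.sin t)) with hL | hL
  · nlinarith [mul_nonneg hL (by linarith : (0 : ℝ) ≤ 1 + Real.sin t)]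
  · have h1 : 2 + 2 * Real.sin t < 1 := by
      by_contra hcon
      push_neg at hcon
      exact absurd (Real.log_nonneg hcon) (not_le.2 hL)
    nlinarith [mul_nonneg (neg_nonneg.mpr hL.le) (neg_nonneg.mpr (show Real.sin t ≤ 0 by linarith))]

private lemma aux_g1_piece (a b : ℝ) (hab : a ≤ b) (hsub : Set.Icc a b ⊆ Set.Icc π (2 * π))
    (hne : ∀ t ∈ Set.Ioo a b, Real.sin t ≠ -1) :
    IntervalIntegrable (fun t => Real.log (2 + 2 * Real.sin t) * Real.sin t) MeasureTheory.volume a b := by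
  have h1 : IntervalIntegrable
      (fun t => Real.log (2 + 2 * Real.sin t) * Real.sin t + Real.log 4) MeasureTheory.volume a b := by
    apply intervalIntegral.intervalIntegrable_deriv_of_nonneg (g := auxB)
    · rw [Set.uIcc_of_le hab]
      exact auxB_contOn.mono hsub
    · intro x hx
      rw [min_eq_left hab, max_eq_right hab] at hx
      exact auxB_hasDeriv (hne x hx)
    · intro x hx
      have := aux_g1_lower x
      linarith
  simpa using h1.sub (intervalIntegrable_const (c := Real.log 4))

private lemma aux_G_int (r : ℝ) (hr : 0 < r) :
    IntervalIntegrable (fun t => Real.log (1 + r ^ 2 + 2 * r * Real.sin t) * Real.sin t)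
      MeasureTheory.volume 0 (2 * π) := by
  have hpi := Real.pi_pos
  rcases eq_or_ne r 1 with rfl | hne
  · have hfun : (fun t => Real.log (1 + (1 : ℝ) ^ 2 + 2 * 1 * Real.sin t) * Real.sin t)
        = fun t => Real.log (2 + 2 * Real.sin t) * Real.sin t := by
      funext t
      norm_num
    rw [hfun]
    have i1 : IntervalIntegrable (fun t => Real.log (2 + 2 * Real.sin t) * Real.sin t)
        MeasureTheory.volume 0 π := by
      apply ContinuousOn.intervalIntegrable
      rw [Set.uIcc_of_le hpi.le]
      refine (ContinuousOn.log ?_ ?_).mul Real.continuous_sin.continuousOn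
      · exact (continuous_const.add (continuous_const.mul Real.continuous_sin)).continuousOn
      · intro t ht
        have := Real.sin_nonneg_of_nonneg_of_le_pi ht.1 ht.2
        exact ne_of_gt (by linarith)
    have i2 : IntervalIntegrable (fun t => Real.log (2 + 2 * Real.sin t) * Real.sin t)
        MeasureTheory.volume π (3 * π / 2) := by
      apply aux_g1_piece _ _ (by linarith)
      · intro x hx
        exact ⟨hx.1, by linarith [hx.2]⟩
      · intro x hx
        exact aux_sin_ne_neg_one hx.1 (by linarith [hx.2]) (ne_of_lt hx.2)
    have i3 : IntervalIntegrable (fun t => Real.log (2 + 2 * Real.sin t) * Real.sin t)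
        MeasureTheory.volume (3 * π / 2) (2 * π) := by
      apply aux_g1_piece _ _ (by linarith)
      · intro x hx
        exact ⟨by linarith [hx.1], hx.2⟩
      · intro x hx
        exact aux_sin_ne_neg_one (by linarith [hx.1]) hx.2 (ne_of_gt hx.1)
    exact i1.trans (i2.trans i3)
  · apply Continuous.intervalIntegrable
    have hpos : ∀ t, 0 < 1 + r ^ 2 + 2 * r * Real.sin t := by
      intro t
      have h3 : 1 - r ≠ 0 := sub_ne_zero.mpr (Ne.symm hne)
      have h2 : 0 < (1 - r) ^ 2 := by positivity
      nlinarith [Real.neg_one_le_sin t]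
    exact ((continuous_const.add (continuous_const.mul Real.continuous_sin)).log
      (fun t => (hpos t).ne')).mul Real.continuous_sin

/-- For every real `r > 0`, `∫ t in 0..2π, log|r·exp(i t) + i| · sin t dt > 0`. -/
theorem circle_average_log_abs_add_I_mul_sin_pos (r : ℝ) (hr : 0 < r) :
    0 < ∫ t in (0 : ℝ)..(2 * Real.pi),
        Real.log ‖(r : ℂ) * Complex.exp (Complex.I * (t : ℂ)) + Complex.I‖
          * Real.sin t := by
  have hpi := Real.pi_pos
  set G : ℝ → ℝ := fun t => Real.log (1 + r ^ 2 + 2 * r * Real.sin t) * Real.sin t with hG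
  have habs : ∀ t : ℝ,
      Real.log ‖(r : ℂ) * Complex.exp (Complex.I * (t : ℂ)) + Complex.I‖
        * Real.sin t = (1 / 2) * G t := by
    intro t
    have hz : ‖(r : ℂ) * Complex.exp (Complex.I * (t : ℂ)) + Complex.I‖ ^ 2
        = 1 + r ^ 2 + 2 * r * Real.sin t := by
      rw [Complex.sq_norm, Complex.normSq_apply]
      rw [mul_comm Complex.I (t : ℂ), Complex.exp_mul_I]
      simp [Complex.add_re, Complex.add_im, Complex.mul_re, Complex.mul_im, Complex.cos_ofReal_re, Complex.sin_ofReal_re, Complex.cos_ofReal_im, Complex.sin_ofReal_im]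
      nlinarith [Real.sin_sq_add_cos_sq t]
    have h2 : Real.log (1 + r ^ 2 + 2 * r * Real.sin t)
        = 2 * Real.log ‖(r : ℂ) * Complex.exp (Complex.I * (t : ℂ)) + Complex.I‖ := by
      rw [← hz, Real.log_pow]
      norm_num
    rw [hG]
    simp only
    rw [h2]
    ring
  have hcongr : (∫ t in (0 : ℝ)..(2 * Real.pi),
      Real.log ‖(r : ℂ) * Complex.exp (Complex.I * (t : ℂ)) + Complex.I‖
        * Real.sin t) = ∫ t in (0 : ℝ)..(2 * Real.pi), (1 / 2) * G t :=
    intervalIntegral.integral_congr (fun t _ => habs t)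
  rw [hcongr, intervalIntegral.integral_const_mul]
  have hint : IntervalIntegrable G MeasureTheory.volume 0 (2 * π) := aux_G_int r hr
  have h1 : IntervalIntegrable G MeasureTheory.volume 0 π := by
    apply hint.mono_set
    rw [Set.uIcc_of_le hpi.le, Set.uIcc_of_le (by linarith : (0:ℝ) ≤ 2 * π)]
    exact Set.Icc_subset_Icc le_rfl (by linarith)
  have h2 : IntervalIntegrable G MeasureTheory.volume π (2 * π) := by
    apply hint.mono_set
    rw [Set.uIcc_of_le (by linarith : π ≤ 2 * π), Set.uIcc_of_le (by linarith : (0:ℝ) ≤ 2 * π)]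
    exact Set.Icc_subset_Icc (by linarith) le_rfl
  have h3 : IntervalIntegrable (fun s => G (2 * π - s)) MeasureTheory.volume 0 π := by
    have h4 := h2.comp_sub_left (2 * π)
    rw [show 2 * π - π = π from by ring, sub_self] at h4
    exact h4.symm
  have hflip : (∫ t in π..(2 * π), G t) = ∫ s in (0 : ℝ)..π, G (2 * π - s) := by
    rw [intervalIntegral.integral_comp_sub_left G (2 * π),
      show 2 * π - π = π from by ring, sub_zero]
  have hsum : (∫ t in (0 : ℝ)..(2 * π), G t)
      = ∫ s in (0 : ℝ)..π, (G s + G (2 * π - s)) := by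
    rw [← intervalIntegral.integral_add_adjacent_intervals h1 h2, hflip,
      ← intervalIntegral.integral_add h1 h3]
  have hpos : 0 < ∫ s in (0 : ℝ)..π, (G s + G (2 * π - s)) := by
    apply intervalIntegral.intervalIntegral_pos_of_pos_on (h1.add h3) _ hpi
    intro s hs
    have hsin : 0 < Real.sin s := Real.sin_pos_of_pos_of_lt_pi hs.1 hs.2
    have hsin2 : Real.sin (2 * π - s) = -Real.sin s := by simp [Real.sin_sub]
    rw [hG]
    simp only
    rw [hsin2]
    have harg : 1 + r ^ 2 + 2 * r * -Real.sin s = 1 + r ^ 2 - 2 * r * Real.sin s := by ring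
    rw [harg]
    have hA : 1 < 1 + r ^ 2 + 2 * r * Real.sin s := by nlinarith
    have hB0 : 0 ≤ 1 + r ^ 2 - 2 * r * Real.sin s := by nlinarith [sq_nonneg (1 - r), mul_nonneg hr.le (sub_nonneg.mpr (Real.sin_le_one s))]
    have hlt : Real.log (1 + r ^ 2 - 2 * r * Real.sin s)
        < Real.log (1 + r ^ 2 + 2 * r * Real.sin s) := by
      rcases hB0.eq_or_lt with hcase | hcase
      · rw [← hcase, Real.log_zero]
        exact Real.log_pos hA
      · exact Real.log_lt_log hcase (by nlinarith)
    nlinarith [mul_pos (sub_pos.2 hlt) hsin]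
  linarith
end

section
/- The function z ↦ log(|z + 1| / |z − 1|) · Re(z) / |z|^4 is nonnegative on the right half-plane {z ∈ ℂ : Re(z) > 0}, and its Lebesgue integral over that half-plane with respect to the standard area (Lebesgue) measure on ℂ is +∞. -/
open Complex MeasureTheory

/-- Pointwise lower bound on a tent region near the origin. -/
lemma key_lower_bound {z : ℂ} (hx : 0 < z.re) (hx8 : z.re ≤ 1/8) (hy : |z.im| ≤ z.re) :
    (1/4) / z.re ^ 2 ≤
      Real.log (‖z + 1‖ / ‖z - 1‖) * z.re / ‖z‖ ^ 4 := by
  set x := z.re with hxdef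
  set y := z.im with hydef
  have hyx := abs_le.mp hy
  have hy2 : y ^ 2 ≤ x ^ 2 := by nlinarith [hyx.1, hyx.2]
  have ha2 : (‖z + 1‖) ^ 2 = (x + 1) ^ 2 + y ^ 2 := by
    rw [Complex.sq_norm, Complex.normSq_apply]
    simp [Complex.add_re, Complex.add_im]
    ring
  have hb2 : (‖z - 1‖) ^ 2 = (x - 1) ^ 2 + y ^ 2 := by
    rw [Complex.sq_norm, Complex.normSq_apply]
    simp [Complex.sub_re, Complex.sub_im]
    ring
  have hr2 : (‖z‖) ^ 2 = x ^ 2 + y ^ 2 := by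
    rw [Complex.sq_norm, Complex.normSq_apply]; ring
  have hz1 : z ≠ 1 := by
    intro h
    rw [hxdef, h] at hx8
    norm_num at hx8
  have hzm1 : z ≠ -1 := by
    intro h
    rw [hxdef, h] at hx
    norm_num at hx
  have hbpos : 0 < ‖z - 1‖ := norm_pos_iff.mpr (sub_ne_zero.mpr hz1)
  have hapos : 0 < ‖z + 1‖ := by
    apply norm_pos_iff.mpr
    intro h
    exact hzm1 (by linear_combination h)
  set a := ‖z + 1‖
  set b := ‖z - 1‖
  have hA2 : a ^ 2 ≤ 2 := by nlinarith
  have hdiff : a ^ 2 - b ^ 2 = 4 * x := by rw [ha2, hb2]; ring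
  have hlog2 : 2 * x ≤ Real.log (a ^ 2 / b ^ 2) := by
    have h1 : Real.log (b ^ 2 / a ^ 2) ≤ b ^ 2 / a ^ 2 - 1 :=
      Real.log_le_sub_one_of_pos (by positivity)
    have h2 : Real.log (a ^ 2 / b ^ 2) = -Real.log (b ^ 2 / a ^ 2) := by
      rw [← Real.log_inv]
      congr 1
      field_simp
    have h3 : b ^ 2 / a ^ 2 ≤ 1 - 2 * x := by
      rw [div_le_iff₀ (by positivity)]
      nlinarith
    linarith [h2 ▸ (neg_le_neg h1)]
  have hL : x ≤ Real.log (a / b) := by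
    have heq : Real.log (a ^ 2 / b ^ 2) = 2 * Real.log (a / b) := by
      rw [← div_pow, Real.log_pow]
      norm_num
    linarith [heq ▸ hlog2]
  have hr4 : (‖z‖) ^ 4 = (x ^ 2 + y ^ 2) ^ 2 := by
    rw [show (4 : ℕ) = 2 * 2 from rfl, pow_mul, hr2]
  rw [hr4]
  have h4 : (x ^ 2 + y ^ 2) ^ 2 ≤ 4 * x ^ 4 := by nlinarith
  have hpos : (0 : ℝ) < (x ^ 2 + y ^ 2) ^ 2 := by positivity
  calc (1/4) / x ^ 2 = x * x / (4 * x ^ 4) := by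
        field_simp
    _ ≤ Real.log (a / b) * x / ((x ^ 2 + y ^ 2) ^ 2) :=
        div_le_div₀ (by nlinarith) (by nlinarith) hpos h4

/-- The function `z ↦ log(|z + 1| / |z − 1|) · Re z / |z|⁴` is nonnegative on the right
half-plane `{z : Re z > 0}`, and its Lebesgue integral over that half-plane with respect
to the standard area measure on `ℂ` is `+∞`. -/
theorem lintegral_right_half_plane_eq_top :
    (∀ z : ℂ, 0 < z.re →
      0 ≤ Real.log (‖z + 1‖ / ‖z - 1‖) * z.re / ‖z‖ ^ 4) ∧
    ∫⁻ z in {z : ℂ | 0 < z.re},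
        ENNReal.ofReal
          (Real.log (‖z + 1‖ / ‖z - 1‖) * z.re / ‖z‖ ^ 4)
      = ⊤ := by
  constructor
  · -- nonnegativity
    intro z hz
    apply div_nonneg _ (by positivity)
    apply mul_nonneg _ hz.le
    rcases eq_or_ne z 1 with rfl | hz1
    · simp
    · have hbpos : 0 < ‖z - 1‖ := norm_pos_iff.mpr (sub_ne_zero.mpr hz1)
      apply Real.log_nonneg
      rw [le_div_iff₀ hbpos, one_mul]
      have ha2 : (‖z + 1‖) ^ 2 = (z.re + 1) ^ 2 + z.im ^ 2 := by
        rw [Complex.sq_norm, Complex.normSq_apply]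
        simp [Complex.add_re, Complex.add_im]
        ring
      have hb2 : (‖z - 1‖) ^ 2 = (z.re - 1) ^ 2 + z.im ^ 2 := by
        rw [Complex.sq_norm, Complex.normSq_apply]
        simp [Complex.sub_re, Complex.sub_im]
        ring
      nlinarith [norm_nonneg (z + 1), norm_nonneg (z - 1)]
  · -- divergence
    set f : ℂ → ENNReal := fun z =>
      ENNReal.ofReal
        (Real.log (‖z + 1‖ / ‖z - 1‖) * z.re / ‖z‖ ^ 4)
    set c : ℕ → ℝ := fun n => (1/2 : ℝ) ^ (n + 4) with hcdef
    have hcpos : ∀ n, 0 < c n := fun n => by positivity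
    have hc8 : ∀ n, 2 * c n ≤ 1/8 := by
      intro n
      have : c n ≤ (1/2 : ℝ) ^ 4 := by
        apply pow_le_pow_of_le_one (by norm_num) (by norm_num)
        omega
      simp only [hcdef] at this ⊢
      nlinarith
    set R : ℕ → Set ℂ := fun n =>
      Complex.measurableEquivRealProd ⁻¹' (Set.Ioo (c n) (2 * c n) ×ˢ Set.Ioo (-(c n)) (c n))
      with hRdef
    have hmemR : ∀ n z, z ∈ R n ↔
        (c n < z.re ∧ z.re < 2 * c n) ∧ (-(c n) < z.im ∧ z.im < c n) := by
      intro n z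
      simp [hRdef, Complex.measurableEquivRealProd_apply, Set.mem_Ioo]
    have hRmeas : ∀ n, MeasurableSet (R n) :=
      fun n => Complex.measurableEquivRealProd.measurable
        ((measurableSet_Ioo).prod (measurableSet_Ioo))
    have hRvol : ∀ n, volume (R n) = ENNReal.ofReal (c n) * ENNReal.ofReal (2 * c n) := by
      intro n
      rw [hRdef]
      rw [Complex.volume_preserving_equiv_real_prod.measure_preimage
        ((measurableSet_Ioo.prod measurableSet_Ioo).nullMeasurableSet)]
      rw [show (volume : Measure (ℝ × ℝ)) = (volume : Measure ℝ).prod volume from rfl]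
      rw [Measure.prod_prod, Real.volume_Ioo, Real.volume_Ioo]
      have h1 : 2 * c n - c n = c n := by ring
      have h2 : c n - -(c n) = 2 * c n := by ring
      rw [h1, h2]
    have hdisj : Pairwise (Function.onFun Disjoint R) := by
      have hkey : ∀ m n : ℕ, m < n → Disjoint (R m) (R n) := by
        intro m n hmn
        rw [Set.disjoint_left]
        intro z hzm hzn
        have h1 := ((hmemR m z).mp hzm).1
        have h2 := ((hmemR n z).mp hzn).1
        have : 2 * c n ≤ c m := by
          simp only [hcdef]
          rw [show 2 * (1/2 : ℝ) ^ (n + 4) = (1/2 : ℝ) ^ (n + 3) by ring]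
          apply pow_le_pow_of_le_one (by norm_num) (by norm_num)
          omega
        linarith [h1.1, h2.2]
      intro m n hmn
      rcases hmn.lt_or_gt with h | h
      · exact hkey m n h
      · exact (hkey n m h).symm
    have hRsub : ∀ n, R n ⊆ {z : ℂ | 0 < z.re} := by
      intro n z hz
      have h := ((hmemR n z).mp hz).1.1
      exact lt_trans (hcpos n) h
    have hsub : (⋃ n, R n) ⊆ {z : ℂ | 0 < z.re} := Set.iUnion_subset hRsub
    have hlower : ∀ n, ENNReal.ofReal (1/8 : ℝ) ≤ ∫⁻ z in R n, f z := by
      intro n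
      have hconst : ∀ z ∈ R n, ENNReal.ofReal (1 / (16 * (c n) ^ 2)) ≤ f z := by
        intro z hz
        obtain ⟨⟨hx1, hx2⟩, hy1, hy2⟩ := (hmemR n z).mp hz
        have hx : 0 < z.re := lt_trans (hcpos n) hx1
        have hx8 : z.re ≤ 1/8 := le_trans hx2.le (hc8 n)
        have hy : |z.im| ≤ z.re := by
          rw [abs_le]
          constructor <;> nlinarith
        apply ENNReal.ofReal_le_ofReal
        refine le_trans ?_ (key_lower_bound hx hx8 hy)
        rw [div_le_div_iff₀ (by positivity) (by positivity)]
        nlinarith [hcpos n]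
      calc ENNReal.ofReal (1/8 : ℝ)
          = ENNReal.ofReal (1 / (16 * (c n) ^ 2)) * volume (R n) := by
            rw [hRvol n, ← ENNReal.ofReal_mul (by positivity), ← ENNReal.ofReal_mul (by positivity)]
            congr 1
            have := hcpos n
            field_simp
            ring
        _ = ∫⁻ _ in R n, ENNReal.ofReal (1 / (16 * (c n) ^ 2)) :=
            (setLIntegral_const _ _).symm
        _ ≤ ∫⁻ z in R n, f z := setLIntegral_mono' (hRmeas n) hconst
    rw [eq_top_iff]
    calc (⊤ : ENNReal) = ∑' _ : ℕ, ENNReal.ofReal (1/8 : ℝ) :=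
          (ENNReal.tsum_const_eq_top_of_ne_zero (by simp)).symm
      _ ≤ ∑' n, ∫⁻ z in R n, f z := ENNReal.tsum_le_tsum hlower
      _ = ∫⁻ z in ⋃ n, R n, f z := (lintegral_iUnion hRmeas hdisj f).symm
      _ ≤ ∫⁻ z in {z : ℂ | 0 < z.re}, f z := lintegral_mono_set hsub
end

section
/- The function z ↦ log|z + 1| · Re(z) / |z|^4 is not Lebesgue integrable on ℂ with respect to the standard area (Lebesgue) measure; that is, the integral of its absolute value over ℂ is infinite. -/
open Complex MeasureTheory

open Set in
/-- Divergence of `x ↦ (4x)⁻¹` near `0`. -/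
lemma aux_lintegral_inv_top :
    ∫⁻ x in Set.Ioo (0:ℝ) (1/2), ENNReal.ofReal ((4*x)⁻¹) = ⊤ := by
  by_contra h
  have hm : Measurable fun x : ℝ => (4*x)⁻¹ :=
    (measurable_const.mul measurable_id).inv
  have hnn : 0 ≤ᵐ[volume.restrict (Ioo (0:ℝ) (1/2))] fun x : ℝ => (4*x)⁻¹ := by
    filter_upwards [ae_restrict_mem measurableSet_Ioo] with x hx
    have : (0:ℝ) < x := hx.1
    positivity
  have hint : IntegrableOn (fun x : ℝ => (4*x)⁻¹) (Ioo 0 (1/2)) := by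
    refine ⟨hm.aestronglyMeasurable, ?_⟩
    rw [hasFiniteIntegral_iff_ofReal hnn]
    exact lt_top_iff_ne_top.2 h
  have hint2 : IntegrableOn (fun x : ℝ => x⁻¹) (Ioo 0 (1/2)) := by
    refine (hint.const_mul (4:ℝ)).congr ?_
    filter_upwards [ae_restrict_mem measurableSet_Ioo] with x hx
    have hx0 : x ≠ 0 := ne_of_gt hx.1
    field_simp
  have hII : IntervalIntegrable (fun x : ℝ => x⁻¹) volume 0 (1/2) := by
    rw [intervalIntegrable_iff_integrableOn_Ioo_of_le (by norm_num)]
    exact hint2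
  rw [intervalIntegrable_inv_iff] at hII
  rcases hII with h1 | h2
  · norm_num at h1
  · exact h2 (Set.left_mem_uIcc)

/-- The divergence of the lintegral. -/
lemma aux_key :
    ∫⁻ z : ℂ, ENNReal.ofReal
        |Real.log (‖z + 1‖) * z.re / ‖z‖ ^ 4| = ⊤ := by
  set S : Set ℂ := {z : ℂ | 0 < z.re ∧ z.re < 1/2 ∧ |z.im| < z.re} with hSdef
  have hS : MeasurableSet S :=
    (measurableSet_lt measurable_const Complex.measurable_re).inter
      ((measurableSet_lt Complex.measurable_re measurable_const).inter
        (measurableSet_lt Complex.measurable_im.abs Complex.measurable_re))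
  -- pointwise lower bound
  have hle : ∀ z : ℂ, S.indicator (fun z : ℂ => ENNReal.ofReal (1/(8 * z.re^2))) z ≤
      ENNReal.ofReal |Real.log (‖z + 1‖) * z.re / ‖z‖ ^ 4| := by
    intro z
    by_cases hz : z ∈ S
    · rw [Set.indicator_of_mem hz]
      apply ENNReal.ofReal_le_ofReal
      obtain ⟨h1, h2, h3⟩ := hz
      have h3' := abs_lt.1 h3
      have habs2 : ‖z‖ ^ 2 ≤ 2 * z.re ^ 2 := by
        rw [Complex.sq_norm, Complex.normSq_apply]
        nlinarith [h3'.1, h3'.2]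
      have habs4 : ‖z‖ ^ 4 ≤ 4 * z.re ^ 4 := by
        nlinarith [norm_nonneg z, sq_nonneg ‖z‖, habs2]
      have hzpos : 0 < ‖z‖ := by
        refine norm_pos_iff.mpr fun h0 => ?_
        rw [h0] at h1; simp at h1
      have hlog : z.re / 2 ≤ Real.log (‖z+1‖) := by
        have h1p : (1 : ℝ) + z.re ≤ ‖z + 1‖ := by
          have hre := Complex.abs_re_le_norm (z+1)
          rw [Complex.add_re, Complex.one_re] at hre
          calc (1:ℝ) + z.re = z.re + 1 := by ring
          _ ≤ |z.re + 1| := le_abs_self _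
          _ ≤ ‖z + 1‖ := hre
        have h0 : (0:ℝ) < 1 + z.re := by linarith
        have hlog1 : Real.log (1 + z.re) ≤ Real.log (‖z+1‖) :=
          Real.log_le_log h0 h1p
        have hsub := Real.log_le_sub_one_of_pos (inv_pos.2 h0)
        rw [Real.log_inv] at hsub
        have heq : (1+z.re)⁻¹ - 1 = -(z.re/(1+z.re)) := by field_simp; ring
        rw [heq] at hsub
        have hstep : z.re / 2 ≤ z.re / (1 + z.re) := by
          apply div_le_div_of_nonneg_left h1.le h0
          linarith
        linarith
      have h4pos : 0 < ‖z‖ ^ 4 := by positivity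
      have hfz : 1/(8*z.re^2) ≤ Real.log (‖z+1‖) * z.re / ‖z‖ ^ 4 := by
        rw [div_le_div_iff₀ (by positivity) h4pos]
        calc (1:ℝ) * ‖z‖ ^ 4 ≤ 4 * z.re ^ 4 := by linarith
        _ = (z.re/2 * z.re) * (8 * z.re^2) := by ring
        _ ≤ Real.log (‖z+1‖) * z.re * (8 * z.re^2) := by nlinarith
      exact le_trans hfz (le_abs_self _)
    · rw [Set.indicator_of_notMem hz]; exact zero_le
  have hbound := lintegral_mono (μ := volume) hle
  rw [lintegral_indicator hS _] at hbound
  -- compute the set integral and show it is ⊤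
  have hmp := Complex.volume_preserving_equiv_real_prod.symm
  have heq := hmp.setLIntegral_comp_preimage_emb
    Complex.measurableEquivRealProd.symm.measurableEmbedding
    (fun z : ℂ => ENNReal.ofReal (1/(8 * z.re^2))) S
  set T : Set (ℝ × ℝ) := Complex.measurableEquivRealProd.symm ⁻¹' S with hTdef
  have hT : MeasurableSet T :=
    Complex.measurableEquivRealProd.symm.measurable hS
  have hTtop : ∫⁻ p in T,
      ENNReal.ofReal (1/(8 * ((Complex.measurableEquivRealProd.symm p).re)^2)) = ⊤ := by
    have hmem : ∀ p : ℝ × ℝ, p ∈ T ↔ 0 < p.1 ∧ p.1 < 1/2 ∧ |p.2| < p.1 := by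
      intro p; rfl
    have hre : ∀ p : ℝ × ℝ, (Complex.measurableEquivRealProd.symm p).re = p.1 := fun p => rfl
    simp_rw [hre]
    rw [← lintegral_indicator hT _, Measure.volume_eq_prod, lintegral_prod]
    swap
    · exact ((ENNReal.measurable_ofReal.comp
        (((measurable_fst.pow_const 2).const_mul 8).inv.const_mul 1
          |>.mono le_rfl le_rfl)).indicator hT).aemeasurable
    have hinner : ∀ x : ℝ, (∫⁻ y, T.indicator
          (fun p : ℝ × ℝ => ENNReal.ofReal (1/(8 * p.1^2))) (x, y)) =
        (Set.Ioo (0:ℝ) (1/2)).indicator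
          (fun x => ENNReal.ofReal (1/(8*x^2)) * ENNReal.ofReal (2*x)) x := by
      intro x
      by_cases hx : x ∈ Set.Ioo (0:ℝ) (1/2)
      · rw [Set.indicator_of_mem hx]
        have hy : ∀ y : ℝ, T.indicator
            (fun p : ℝ × ℝ => ENNReal.ofReal (1/(8 * p.1^2))) (x, y) =
            (Set.Ioo (-x) x).indicator (fun _ => ENNReal.ofReal (1/(8*x^2))) y := by
          intro y
          by_cases hyx : y ∈ Set.Ioo (-x) x
          · rw [Set.indicator_of_mem hyx, Set.indicator_of_mem]
            exact (hmem (x, y)).2 ⟨hx.1, hx.2, abs_lt.2 ⟨hyx.1, hyx.2⟩⟩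
          · rw [Set.indicator_of_notMem hyx, Set.indicator_of_notMem]
            intro hm2
            exact hyx (Set.mem_Ioo.2 (abs_lt.1 ((hmem (x, y)).1 hm2).2.2))
        simp_rw [hy]
        rw [lintegral_indicator_const measurableSet_Ioo, Real.volume_Ioo]
        have hxx : x - -x = 2*x := by ring
        rw [hxx]
      · rw [Set.indicator_of_notMem hx]
        have hy : ∀ y : ℝ, T.indicator
            (fun p : ℝ × ℝ => ENNReal.ofReal (1/(8 * p.1^2))) (x, y) = 0 := by
          intro y
          apply Set.indicator_of_notMem
          intro hm2
          have := (hmem (x, y)).1 hm2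
          exact hx ⟨this.1, this.2.1⟩
        simp only [hy, lintegral_zero]
    rw [lintegral_congr hinner, lintegral_indicator measurableSet_Ioo _]
    have hcongr : ∀ᵐ x ∂(volume.restrict (Set.Ioo (0:ℝ) (1/2))),
        ENNReal.ofReal (1/(8*x^2)) * ENNReal.ofReal (2*x) = ENNReal.ofReal ((4*x)⁻¹) := by
      filter_upwards [ae_restrict_mem measurableSet_Ioo] with x hx
      have hx0 : (0:ℝ) < x := hx.1
      rw [← ENNReal.ofReal_mul (by positivity)]
      congr 1
      field_simp
      ring
    rw [lintegral_congr_ae hcongr]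
    exact aux_lintegral_inv_top
  rw [← heq, hTtop, top_le_iff] at hbound
  exact hbound

/-- The function `z ↦ log|z + 1| · Re z / |z|⁴` is not Lebesgue integrable on `ℂ`:
the integral of its absolute value over `ℂ` is infinite. -/
theorem not_integrable_log_abs_add_one_mul_re :
    ¬ Integrable (fun z : ℂ =>
        Real.log (‖z + 1‖) * z.re / ‖z‖ ^ 4) volume ∧
    ∫⁻ z : ℂ, ENNReal.ofReal
        |Real.log (‖z + 1‖) * z.re / ‖z‖ ^ 4| = ⊤ := by
  refine ⟨fun h => ?_, aux_key⟩
  have hfin := h.2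
  rw [hasFiniteIntegral_iff_norm] at hfin
  simp_rw [Real.norm_eq_abs] at hfin
  rw [aux_key] at hfin
  exact lt_irrefl _ hfin
end
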